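/- Let H be a finite poset, K a field, and A = K[H]/I with I homogeneous. If for every revlex linear extension τ of the partial order on H one has in_τ(I) = J_H (the ideal of products of incomparable pairs), then A is a homogeneous ASL on H. -/

import Mathlib

open MvPolynomial

attribute [local instance] MvPolynomial.gradedAlgebra

/-- Total degree of a monomial exponent vector. -/
def mdeg {H : Type*} (μ : H →₀ ℕ) : ℕ := μ.sum fun _ e => e

/-- The (degree) reverse lexicographic order on monomials induced by the
variable order `σ` (larger `σ`-value = larger variable): `μ < ν` iff
`deg μ < deg ν`, or the degrees agree and `μ` has the strictly larger exponent
at the `σ`-smallest variable where `μ` and `ν` differ. -/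
def RevLexLT {H : Type*} (σ : H → ℕ) (μ ν : H →₀ ℕ) : Prop :=
  mdeg μ < mdeg ν ∨ (mdeg μ = mdeg ν ∧
    ∃ h, ν h < μ h ∧ ∀ h', σ h' < σ h → μ h' = ν h')

/-- `μ` is the leading (initial) monomial of `f` for the revlex order given by `σ`. -/
def IsLeadMon {K H : Type*} [Field K] (σ : H → ℕ) (f : MvPolynomial H K)
    (μ : H →₀ ℕ) : Prop :=
  μ ∈ f.support ∧ ∀ ν ∈ f.support, ν ≠ μ → RevLexLT σ ν μ

/-- The initial ideal `in_τ(I)`, generated by the leading monomials of the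
nonzero elements of `I`. -/
noncomputable def initialIdeal {K H : Type*} [Field K] (σ : H → ℕ)
    (I : Ideal (MvPolynomial H K)) : Ideal (MvPolynomial H K) :=
  Ideal.span { p | ∃ f ∈ I, ∃ μ, IsLeadMon σ f μ ∧ p = monomial μ (1 : K) }

/-- The monomial ideal `J_H` generated by the products `xy` of incomparable
elements `x, y ∈ H`. -/
noncomputable def JHIdeal (K H : Type*) [Field K] [PartialOrder H] : Ideal (MvPolynomial H K) :=
  Ideal.span { p | ∃ x y : H, ¬ x ≤ y ∧ ¬ y ≤ x ∧ p = X x * X y }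

/-- `σ : H → ℕ` encodes a linear extension of the partial order on `H`. -/
def IsLinExt {H : Type*} [PartialOrder H] (σ : H → ℕ) : Prop :=
  Function.Injective σ ∧ ∀ u v : H, u < v → σ u < σ v

/-- A monomial is standard if its support is a chain of `H`. -/
def IsStdMon {H : Type*} [PartialOrder H] (μ : H →₀ ℕ) : Prop :=
  ∀ x ∈ μ.support, ∀ y ∈ μ.support, x ≤ y ∨ y ≤ x

namespace Stmt16Aux

variable {K H : Type*}

lemma mdeg_eq_degree (μ : H →₀ ℕ) : mdeg μ = Finsupp.degree μ := rfl

lemma mdeg_add (μ ν : H →₀ ℕ) : mdeg (μ + ν) = mdeg μ + mdeg ν := by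
  simp only [mdeg_eq_degree, Finsupp.degree_eq_weight_one, map_add]

lemma mdeg_single (x : H) (n : ℕ) : mdeg (Finsupp.single x n) = n :=
  Finsupp.sum_single_index rfl

lemma le_mdeg (μ : H →₀ ℕ) (h : H) : μ h ≤ mdeg μ := by
  rw [mdeg_eq_degree]; exact Finsupp.le_degree h μ

lemma revlex_irrefl (σ : H → ℕ) (μ : H →₀ ℕ) : ¬ RevLexLT σ μ μ := by
  rintro (h | ⟨-, h, hh, -⟩)
  · exact lt_irrefl _ h
  · exact lt_irrefl _ hh

lemma revlex_trans {σ : H → ℕ} (hσ : Function.Injective σ) {a b c : H →₀ ℕ}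
    (hab : RevLexLT σ a b) (hbc : RevLexLT σ b c) : RevLexLT σ a c := by
  rcases hab with h1 | ⟨e1, h1, hb1, heq1⟩
  · rcases hbc with h2 | ⟨e2, -⟩
    · exact Or.inl (h1.trans h2)
    · exact Or.inl (lt_of_lt_of_le h1 (le_of_eq e2))
  · rcases hbc with h2 | ⟨e2, h2, hc2, heq2⟩
    · exact Or.inl (lt_of_le_of_lt (le_of_eq e1) h2)
    · right
      refine ⟨e1.trans e2, ?_⟩
      rcases lt_trichotomy (σ h1) (σ h2) with hlt | heq | hgt
      · exact ⟨h1, (heq2 h1 hlt) ▸ hb1, fun h' hh' =>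
          (heq1 h' hh').trans (heq2 h' (hh'.trans hlt))⟩
      · have : h1 = h2 := hσ heq
        subst this
        exact ⟨h1, hc2.trans hb1, fun h' hh' => (heq1 h' hh').trans (heq2 h' hh')⟩
      · refine ⟨h2, ?_, fun h' hh' => (heq1 h' (hh'.trans hgt)).trans (heq2 h' hh')⟩
        rw [heq1 h2 hgt]; exact hc2

lemma revlex_total {σ : H → ℕ} (hσ : Function.Injective σ) {μ ν : H →₀ ℕ}
    (h : μ ≠ ν) : RevLexLT σ μ ν ∨ RevLexLT σ ν μ := by
  classical
  rcases lt_trichotomy (mdeg μ) (mdeg ν) with hd | hd | hd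
  · exact Or.inl (Or.inl hd)
  · have hne : ∃ h0, μ h0 ≠ ν h0 := by
      by_contra hc
      push_neg at hc
      exact h (Finsupp.ext hc)
    obtain ⟨h0, hh0⟩ := hne
    set D : Finset H := (μ.support ∪ ν.support).filter (fun a => μ a ≠ ν a) with hD
    have hmem : ∀ a, μ a ≠ ν a → a ∈ D := by
      intro a ha
      refine Finset.mem_filter.mpr ⟨Finset.mem_union.mpr ?_, ha⟩
      rcases Nat.eq_zero_or_pos (μ a) with h1 | h1
      · right
        rw [Finsupp.mem_support_iff]
        rw [h1] at ha
        exact fun hc => ha hc.symm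
      · left
        rw [Finsupp.mem_support_iff]
        omega
    obtain ⟨a0, ha0D, ha0min⟩ := D.exists_min_image σ ⟨h0, hmem h0 hh0⟩
    have hbelow : ∀ h', σ h' < σ a0 → μ h' = ν h' := by
      intro h' hh'
      by_contra hc
      exact absurd (ha0min h' (hmem h' hc)) (not_le.mpr hh')
    have ha0 : μ a0 ≠ ν a0 := (Finset.mem_filter.mp ha0D).2
    rcases lt_or_gt_of_ne ha0 with hlt | hgt
    · exact Or.inr (Or.inr ⟨hd.symm, a0, hlt, fun h' hh' => (hbelow h' hh').symm⟩)
    · exact Or.inl (Or.inr ⟨hd, a0, hgt, hbelow⟩)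
  · exact Or.inr (Or.inl hd)

lemma exists_max_finset {α : Type*} (r : α → α → Prop)
    (htrans : ∀ {a b c}, r a b → r b c → r a c)
    (htot : ∀ a b, a ≠ b → r a b ∨ r b a)
    {s : Finset α} (hs : s.Nonempty) :
    ∃ μ ∈ s, ∀ ν ∈ s, ν ≠ μ → r ν μ := by
  classical
  induction s using Finset.induction with
  | empty => exact absurd hs (by simp)
  | @insert a s ha IH =>
    rcases s.eq_empty_or_nonempty with rfl | hne
    · refine ⟨a, Finset.mem_insert_self a ∅, ?_⟩
      intro ν hν hνa
      simp only [Finset.mem_insert, Finset.notMem_empty, or_false] at hν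
      exact absurd hν hνa
    · obtain ⟨μ, hμs, hμmax⟩ := IH hne
      have haμ : a ≠ μ := fun h => ha (h ▸ hμs)
      rcases htot a μ haμ with hr | hr
      · refine ⟨μ, Finset.mem_insert_of_mem hμs, ?_⟩
        intro ν hν hνμ
        rcases Finset.mem_insert.mp hν with rfl | hν
        · exact hr
        · exact hμmax ν hν hνμ
      · refine ⟨a, Finset.mem_insert_self a s, ?_⟩
        intro ν hν hνa
        rcases Finset.mem_insert.mp hν with rfl | hν
        · exact absurd rfl hνa
        · rcases eq_or_ne ν μ with rfl | hνμ
          · exact hr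
          · exact htrans (hμmax ν hν hνμ) hr

lemma exists_leadMon [Field K] {σ : H → ℕ} (hσ : Function.Injective σ)
    {f : MvPolynomial H K} (hf : f ≠ 0) : ∃ μ, IsLeadMon σ f μ := by
  obtain ⟨μ, hμ, hmax⟩ := exists_max_finset (RevLexLT σ)
    (fun hab hbc => revlex_trans hσ hab hbc) (fun a b hab => revlex_total hσ hab)
    (MvPolynomial.support_nonempty.mpr hf)
  exact ⟨μ, hμ, hmax⟩

lemma revlex_add_left (σ : H → ℕ) (δ : H →₀ ℕ) {μ ν : H →₀ ℕ} (h : RevLexLT σ μ ν) :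
    RevLexLT σ (δ + μ) (δ + ν) := by
  rcases h with h | ⟨e, h0, hlt, heq⟩
  · exact Or.inl (by simp only [mdeg_add]; omega)
  · refine Or.inr ⟨by simp [mdeg_add, e], h0, ?_, fun h' hh' => ?_⟩
    · simp only [Finsupp.add_apply]
      omega
    · simp only [Finsupp.add_apply, heq h' hh']

lemma isLeadMon_monomial_mul [Field K] {σ : H → ℕ} {f : MvPolynomial H K} {μ : H →₀ ℕ}
    (hf : IsLeadMon σ f μ) (δ : H →₀ ℕ) :
    IsLeadMon σ (monomial δ (1 : K) * f) (δ + μ) := by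
  classical
  have hsupp : ∀ ν, ν ∈ (monomial δ (1 : K) * f).support ↔ ∃ ν0 ∈ f.support, ν = δ + ν0 := by
    intro ν
    constructor
    · intro hν
      rw [MvPolynomial.mem_support_iff, coeff_monomial_mul'] at hν
      by_cases hle : δ ≤ ν
      · rw [if_pos hle, one_mul] at hν
        exact ⟨ν - δ, MvPolynomial.mem_support_iff.mpr hν, (add_tsub_cancel_of_le hle).symm⟩
      · rw [if_neg hle] at hν
        exact absurd rfl hν
    · rintro ⟨ν0, hν0, rfl⟩
      rw [MvPolynomial.mem_support_iff, coeff_monomial_mul, one_mul]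
      exact MvPolynomial.mem_support_iff.mp hν0
  refine ⟨(hsupp _).mpr ⟨μ, hf.1, rfl⟩, ?_⟩
  intro ν hν hne
  obtain ⟨ν0, hν0, rfl⟩ := (hsupp ν).mp hν
  have hν0μ : ν0 ≠ μ := fun h => hne (by rw [h])
  exact revlex_add_left σ δ (hf.2 ν0 hν0 hν0μ)


lemma X_mul_X_eq (x y : H) [Field K] :
    (X x * X y : MvPolynomial H K) =
      monomial (Finsupp.single x 1 + Finsupp.single y 1) 1 := by
  have : (X x * X y : MvPolynomial H K) =
      monomial (Finsupp.single x 1) 1 * monomial (Finsupp.single y 1) 1 := rfl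
  rw [this, monomial_mul, one_mul]

lemma JHIdeal_eq_span [Field K] [PartialOrder H] :
    JHIdeal K H = Ideal.span ((fun s => monomial s (1 : K)) ''
      {μ : H →₀ ℕ | ∃ x y : H, ¬x ≤ y ∧ ¬y ≤ x ∧
        μ = Finsupp.single x 1 + Finsupp.single y 1}) := by
  unfold JHIdeal
  congr 1
  ext p
  constructor
  · rintro ⟨x, y, h1, h2, rfl⟩
    exact ⟨_, ⟨x, y, h1, h2, rfl⟩, (X_mul_X_eq x y).symm⟩
  · rintro ⟨μ, ⟨x, y, h1, h2, rfl⟩, rfl⟩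
    exact ⟨x, y, h1, h2, (X_mul_X_eq x y).symm⟩

lemma monomial_mem_JH_iff [Field K] [PartialOrder H] {μ : H →₀ ℕ} :
    monomial μ (1 : K) ∈ JHIdeal K H ↔
      ∃ x y : H, ¬x ≤ y ∧ ¬y ≤ x ∧ Finsupp.single x 1 + Finsupp.single y 1 ≤ μ := by
  classical
  rw [JHIdeal_eq_span, mem_ideal_span_monomial_image]
  have hsupp : (monomial μ (1 : K)).support = {μ} := by
    rw [support_monomial, if_neg one_ne_zero]
  constructor
  · intro hh
    obtain ⟨si, ⟨x, y, h1, h2, rfl⟩, hle⟩ := hh μ (by rw [hsupp]; exact Finset.mem_singleton_self μ)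
    exact ⟨x, y, h1, h2, hle⟩
  · rintro ⟨x, y, h1, h2, hle⟩ xi hxi
    rw [hsupp, Finset.mem_singleton] at hxi
    subst hxi
    exact ⟨_, ⟨x, y, h1, h2, rfl⟩, hle⟩

lemma not_isStdMon_monomial_mem [Field K] [PartialOrder H] [DecidableEq H] {μ : H →₀ ℕ}
    (h : ¬ IsStdMon μ) : monomial μ (1 : K) ∈ JHIdeal K H := by
  rw [monomial_mem_JH_iff]
  unfold IsStdMon at h
  push_neg at h
  obtain ⟨x, hx, y, hy, h1, h2⟩ := h
  refine ⟨x, y, h1, h2, ?_⟩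
  have hxy : x ≠ y := fun e => h1 (e ▸ le_refl x)
  rw [Finsupp.le_def]
  intro a
  rw [Finsupp.mem_support_iff] at hx hy
  rcases eq_or_ne a x with rfl | hax
  · have : (Finsupp.single a 1 + Finsupp.single y 1 : H →₀ ℕ) a = 1 := by
      simp [Finsupp.single_apply, hxy.symm]
    rw [this]
    omega
  · rcases eq_or_ne a y with rfl | hay
    · have : (Finsupp.single x 1 + Finsupp.single a 1 : H →₀ ℕ) a = 1 := by
        simp [Finsupp.single_apply, hxy]
      rw [this]
      omega
    · have : (Finsupp.single x 1 + Finsupp.single y 1 : H →₀ ℕ) a = 0 := by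
        simp [Finsupp.single_apply, Ne.symm hax, Ne.symm hay]
      rw [Finsupp.add_apply] at this ⊢
      omega

lemma isStdMon_not_mem [Field K] [PartialOrder H] {μ : H →₀ ℕ}
    (h : IsStdMon μ) : monomial μ (1 : K) ∉ JHIdeal K H := by
  rw [monomial_mem_JH_iff]
  rintro ⟨x, y, h1, h2, hle⟩
  have hxy : x ≠ y := fun e => h1 (e ▸ le_refl x)
  have hx : x ∈ μ.support := by
    rw [Finsupp.mem_support_iff]
    have := (Finsupp.le_def.mp hle) x
    have hx1 : (Finsupp.single x 1 + Finsupp.single y 1 : H →₀ ℕ) x = 1 := by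
      simp [Finsupp.single_apply, hxy.symm]
    omega
  have hy : y ∈ μ.support := by
    rw [Finsupp.mem_support_iff]
    have := (Finsupp.le_def.mp hle) y
    have hy1 : (Finsupp.single x 1 + Finsupp.single y 1 : H →₀ ℕ) y = 1 := by
      simp [Finsupp.single_apply, hxy]
    omega
  exact (h x hx y hy).elim h1 h2

lemma initialIdeal_eq_span [Field K] (σ : H → ℕ) (I : Ideal (MvPolynomial H K)) :
    initialIdeal σ I = Ideal.span ((fun s => monomial s (1 : K)) ''
      {μ : H →₀ ℕ | ∃ f ∈ I, IsLeadMon σ f μ}) := by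
  unfold initialIdeal
  congr 1
  ext p
  constructor
  · rintro ⟨f, hf, μ, hμ, rfl⟩
    exact ⟨μ, ⟨f, hf, hμ⟩, rfl⟩
  · rintro ⟨μ, ⟨f, hf, hμ⟩, rfl⟩
    exact ⟨f, hf, μ, hμ, rfl⟩

lemma leadMon_mem_initialIdeal [Field K] {σ : H → ℕ} {I : Ideal (MvPolynomial H K)}
    {f : MvPolynomial H K} {μ : H →₀ ℕ} (hf : f ∈ I) (hlm : IsLeadMon σ f μ) :
    monomial μ (1 : K) ∈ initialIdeal σ I :=
  Ideal.subset_span ⟨f, hf, μ, hlm, rfl⟩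

lemma monomial_mem_initialIdeal [Field K] {σ : H → ℕ} {I : Ideal (MvPolynomial H K)}
    {μ : H →₀ ℕ} (h : monomial μ (1 : K) ∈ initialIdeal σ I) :
    ∃ ν ≤ μ, ∃ f ∈ I, IsLeadMon σ f ν := by
  classical
  rw [initialIdeal_eq_span, mem_ideal_span_monomial_image] at h
  obtain ⟨ν, ⟨f, hf, hlm⟩, hle⟩ := h μ
    (by rw [support_monomial, if_neg one_ne_zero]; exact Finset.mem_singleton_self μ)
  exact ⟨ν, hle, f, hf, hlm⟩

noncomputable def linRank (L : Type*) [LinearOrder L] [Fintype L] (a : L) : ℕ :=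
  (Finset.univ.filter (fun x => x < a)).card

lemma linRank_strictMono {L : Type*} [LinearOrder L] [Fintype L] :
    StrictMono (linRank L) := by
  intro a b hab
  apply Finset.card_lt_card
  constructor
  · intro x hx
    rw [Finset.mem_filter] at hx ⊢
    exact ⟨hx.1, lt_trans hx.2 hab⟩
  · intro hba
    have := hba (Finset.mem_filter.mpr ⟨Finset.mem_univ a, hab⟩)
    exact absurd (Finset.mem_filter.mp this).2 (lt_irrefl a)

lemma linRank_lt_card {L : Type*} [LinearOrder L] [Fintype L] (a : L) :
    linRank L a < Fintype.card L := by
  rw [← Finset.card_univ]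
  apply Finset.card_lt_card
  constructor
  · exact Finset.filter_subset _ _
  · intro hsub
    have := hsub (Finset.mem_univ a)
    exact absurd (Finset.mem_filter.mp this).2 (lt_irrefl a)

lemma exists_linExt (H : Type*) [Fintype H] [PartialOrder H] :
    ∃ σ : H → ℕ, IsLinExt σ ∧ ∀ h, σ h < Fintype.card H := by
  haveI : Fintype (LinearExtension H) :=
    Fintype.ofEquiv H ⟨fun a => a, fun a => a, fun _ => rfl, fun _ => rfl⟩
  have hcard : Fintype.card (LinearExtension H) = Fintype.card H :=
    Fintype.card_congr ⟨fun a => a, fun a => a, fun _ => rfl, fun _ => rfl⟩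
  have hinj : Function.Injective (fun h : H => (toLinearExtension h : LinearExtension H)) :=
    fun a b h => h
  refine ⟨fun h => linRank (LinearExtension H) (toLinearExtension h), ⟨?_, ?_⟩, ?_⟩
  · intro a b hab
    exact hinj (linRank_strictMono.injective hab)
  · intro u v huv
    apply linRank_strictMono
    have hle : toLinearExtension u ≤ toLinearExtension v := toLinearExtension.monotone huv.le
    have hne : (toLinearExtension u : LinearExtension H) ≠ toLinearExtension v :=
      fun hc => huv.ne (hinj hc)
    exact lt_of_le_of_ne hle hne
  · intro h
    rw [← hcard]
    exact linRank_lt_card _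

lemma exists_linExt_downset {H : Type*} [Fintype H] [PartialOrder H] (b : H) :
    ∃ σ : H → ℕ, IsLinExt σ ∧ ∀ a : H, ¬ a ≤ b → σ b < σ a := by
  classical
  obtain ⟨σ0, ⟨hinj, hmono⟩, hbd⟩ := exists_linExt H
  set N := Fintype.card H with hN
  refine ⟨fun h => if h ≤ b then σ0 h else σ0 h + N, ⟨?_, ?_⟩, ?_⟩
  · intro u v huv
    by_cases hu : u ≤ b <;> by_cases hv : v ≤ b <;> simp only [hu, hv, if_pos, if_neg,
      if_true, if_false] at huv
    · exact hinj huv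
    · exfalso; have := hbd u; omega
    · exfalso; have := hbd v; omega
    · exact hinj (by omega)
  · intro u v huv
    have hm := hmono u v huv
    by_cases hu : u ≤ b <;> by_cases hv : v ≤ b <;>
      simp only [hu, hv, if_true, if_false, if_pos, if_neg]
    · exact hm
    · have := hbd u; omega
    · exact absurd (le_trans huv.le hv) hu
    · omega
  · intro a ha
    have hbb : b ≤ b := le_refl b
    simp only [hbb, if_true, ha, if_false]
    have := hbd b
    omega

lemma key_lt {H : Type*} [Fintype H] [PartialOrder H] {x y z t : H}
    (hxy : ¬ x ≤ y) (hzt : z ≤ t)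
    (hne : (Finsupp.single z 1 + Finsupp.single t 1 : H →₀ ℕ) ≠
      Finsupp.single x 1 + Finsupp.single y 1)
    (hall : ∀ σ : H → ℕ, IsLinExt σ →
      RevLexLT σ (Finsupp.single z 1 + Finsupp.single t 1)
        (Finsupp.single x 1 + Finsupp.single y 1)) :
    z < x := by
  classical
  set ν : H →₀ ℕ := Finsupp.single z 1 + Finsupp.single t 1 with hνdef
  set μ : H →₀ ℕ := Finsupp.single x 1 + Finsupp.single y 1 with hμdef
  have hxyne : x ≠ y := fun e => hxy (e ▸ le_refl x)
  have hmdeg : mdeg ν = mdeg μ := by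
    rw [hνdef, hμdef, mdeg_add, mdeg_add, mdeg_single, mdeg_single, mdeg_single, mdeg_single]
  have hνval : ∀ a, ν a = (if z = a then 1 else 0) + (if t = a then 1 else 0) := by
    intro a
    rw [hνdef, Finsupp.add_apply, Finsupp.single_apply, Finsupp.single_apply]
  have hμval : ∀ a, μ a = (if x = a then 1 else 0) + (if y = a then 1 else 0) := by
    intro a
    rw [hμdef, Finsupp.add_apply, Finsupp.single_apply, Finsupp.single_apply]
  have hsup : ∀ a, μ a < ν a → a = z ∨ a = t := by
    intro a ha
    by_contra hc
    push_neg at hc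
    rw [hνval a, if_neg (fun h => hc.1 h.symm), if_neg (fun h => hc.2 h.symm)] at ha
    omega
  have step1 : ∀ b : H, ν b < μ b → ∃ a : H, μ a < ν a ∧ a < b := by
    intro b hb
    by_contra hc
    push_neg at hc
    have hnle : ∀ a, μ a < ν a → ¬ a ≤ b := by
      intro a ha hab
      rcases lt_or_eq_of_le hab with h | h
      · exact hc a ha h
      · subst h; omega
    obtain ⟨σ, hσ, hσb⟩ := exists_linExt_downset b
    rcases hall σ hσ with hd | ⟨-, h0, hlt0, heq0⟩
    · rw [hmdeg] at hd
      exact lt_irrefl _ hd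
    · have hblt := heq0 b (hσb h0 (hnle h0 hlt0))
      omega
  by_cases hxz : x = z
  · exfalso
    by_cases hyt : y = t
    · exact hne (by rw [hνdef, hμdef, hxz, hyt])
    · have hνy : ν y = 0 := by
        rw [hνval y, if_neg (fun h => hxyne (hxz.trans h)), if_neg (fun h => hyt h.symm)]
      have hμy : μ y = 1 := by
        rw [hμval y, if_neg hxyne, if_pos rfl]
      obtain ⟨a, ha, hay⟩ := step1 y (by omega)
      rcases hsup a ha with rfl | rfl
      · exact hxy (hxz ▸ hay).le
      · exact hxy (lt_of_le_of_lt (hxz ▸ hzt) hay).le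
  · by_cases hxt : x = t
    · exact lt_of_le_of_ne (hxt ▸ hzt) (fun h => hxz h.symm)
    · have hνx : ν x = 0 := by
        rw [hνval x, if_neg (fun h => hxz h.symm), if_neg (fun h => hxt h.symm)]
      have hμx : μ x = 1 := by
        rw [hμval x, if_pos rfl, if_neg (fun h => hxyne h.symm)]
      obtain ⟨a, ha, hax⟩ := step1 x (by omega)
      rcases hsup a ha with rfl | rfl
      · exact hax
      · exact lt_of_le_of_lt hzt hax

lemma std_deg2 {H : Type*} [PartialOrder H] [DecidableEq H] {ν : H →₀ ℕ}
    (hstd : IsStdMon ν) (hdeg : mdeg ν = 2) :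
    ∃ z t : H, z ≤ t ∧ ν = Finsupp.single z 1 + Finsupp.single t 1 := by
  classical
  have hsum : ∀ s : Finset H, s ⊆ ν.support → ∑ i ∈ s, ν i ≤ 2 := by
    intro s hs
    calc ∑ i ∈ s, ν i ≤ ∑ i ∈ ν.support, ν i :=
          Finset.sum_le_sum_of_subset hs
      _ = 2 := hdeg
  have hne : ν.support.Nonempty := by
    rw [Finsupp.support_nonempty_iff]
    intro h0
    rw [h0] at hdeg
    simp [mdeg_eq_degree] at hdeg
  obtain ⟨z, hz⟩ := hne
  by_cases hex : ∃ t ∈ ν.support, t ≠ z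
  · obtain ⟨t, ht, htz⟩ := hex
    have hz1 : 1 ≤ ν z := Nat.one_le_iff_ne_zero.mpr (Finsupp.mem_support_iff.mp hz)
    have ht1 : 1 ≤ ν t := Nat.one_le_iff_ne_zero.mpr (Finsupp.mem_support_iff.mp ht)
    have hpair : ν z + ν t ≤ 2 := by
      have := hsum {z, t} (by
        intro a haz
        rcases Finset.mem_insert.mp haz with rfl | h
        · exact hz
        · rw [Finset.mem_singleton] at h; subst h; exact ht)
      rwa [Finset.sum_pair (Ne.symm htz)] at this
    have hzv : ν z = 1 := by omega
    have htv : ν t = 1 := by omega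
    have hother : ∀ a, a ≠ z → a ≠ t → ν a = 0 := by
      intro a haz hat
      by_contra hc
      have ha : a ∈ ν.support := Finsupp.mem_support_iff.mpr hc
      have h3 := hsum {z, t, a} (by
        intro b hb
        rcases Finset.mem_insert.mp hb with rfl | hb
        · exact hz
        · rcases Finset.mem_insert.mp hb with rfl | hb
          · exact ht
          · rw [Finset.mem_singleton] at hb; subst hb; exact ha)
      rw [Finset.sum_insert (by simp [Ne.symm htz, Ne.symm haz]),
        Finset.sum_pair (Ne.symm hat)] at h3
      omega
    have heq : ν = Finsupp.single z 1 + Finsupp.single t 1 := by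
      ext a
      rw [Finsupp.add_apply, Finsupp.single_apply, Finsupp.single_apply]
      rcases eq_or_ne a z with rfl | haz
      · rw [if_pos rfl, if_neg (fun h => htz h), hzv]
        omega
      · rcases eq_or_ne a t with rfl | hat
        · rw [if_neg (fun h => haz h.symm), if_pos rfl, htv]
        · rw [if_neg (fun h => haz h.symm), if_neg (fun h => hat h.symm),
            hother a haz hat]
          omega
    rcases hstd z hz t ht with hle | hle
    · exact ⟨z, t, hle, heq⟩
    · exact ⟨t, z, hle, by rw [heq, add_comm]⟩
  · push_neg at hex
    have hsupp : ν.support = {z} := by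
      apply Finset.eq_singleton_iff_unique_mem.mpr
      exact ⟨hz, fun a ha => hex a ha⟩
    have hzv : ν z = 2 := by
      have : mdeg ν = ν z := by
        rw [mdeg, Finsupp.sum, hsupp, Finset.sum_singleton]
      omega
    refine ⟨z, z, le_refl z, ?_⟩
    ext a
    rw [Finsupp.add_apply, Finsupp.single_apply]
    rcases eq_or_ne a z with rfl | haz
    · rw [if_pos rfl, hzv]
    · rw [if_neg (fun h => haz h.symm)]
      have : a ∉ ν.support := by rw [hsupp, Finset.mem_singleton]; exact haz
      rw [Finsupp.notMem_support_iff.mp this]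
      omega

lemma reduction {K H : Type*} [Field K] [Fintype H] [DecidableEq H] [PartialOrder H]
    {I : Ideal (MvPolynomial H K)} (hhom : I.IsHomogeneous (homogeneousSubmodule H K))
    (hinit : ∀ σ : H → ℕ, IsLinExt σ → initialIdeal σ I = JHIdeal K H)
    {σ : H → ℕ} (hσ : IsLinExt σ) (d : ℕ) :
    ∀ f : MvPolynomial H K, f.IsHomogeneous d →
      ∃ r : MvPolynomial H K, r.IsHomogeneous d ∧
        (∀ ν ∈ r.support, IsStdMon ν) ∧ f - r ∈ I := by
  classical
  have hdeg_of : ∀ (f : MvPolynomial H K), f.IsHomogeneous d →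
      ∀ ν ∈ f.support, mdeg ν = d := by
    intro f hf ν hν
    rw [mdeg_eq_degree, Finsupp.degree_eq_weight_one]
    exact hf (MvPolynomial.mem_support_iff.mp hν)
  haveI hfin : Finite {μ : H →₀ ℕ // mdeg μ = d} := by
    have hfs : {μ : H →₀ ℕ | Finsupp.degree μ ≤ d}.Finite := Finsupp.finite_of_degree_le d
    have hsub : {μ : H →₀ ℕ | mdeg μ = d} ⊆ {μ : H →₀ ℕ | Finsupp.degree μ ≤ d} := by
      intro μ hμ
      rw [Set.mem_setOf_eq] at hμ ⊢
      rw [← mdeg_eq_degree, hμ]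
    exact (hfs.subset hsub).to_subtype
  set S := {μ : H →₀ ℕ // mdeg μ = d} with hS
  set R : S → S → Prop := fun a b => RevLexLT σ a.1 b.1 with hR
  haveI : IsTrans S R := ⟨fun a b c hab hbc => revlex_trans hσ.1 hab hbc⟩
  haveI : IsIrrefl S R := ⟨fun a => revlex_irrefl σ a.1⟩
  have hwf : WellFounded R := Finite.wellFounded_of_trans_of_irrefl R
  have hbase : ∀ f : MvPolynomial H K, f.IsHomogeneous d →
      (∀ ν ∈ f.support, IsStdMon ν) →
      ∃ r : MvPolynomial H K, r.IsHomogeneous d ∧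
        (∀ ν ∈ r.support, IsStdMon ν) ∧ f - r ∈ I :=
    fun f hf hstd => ⟨f, hf, hstd, by rw [sub_self]; exact I.zero_mem⟩
  have hglue : ∀ μ0 : H →₀ ℕ,
      (∀ μ' : S, RevLexLT σ μ'.1 μ0 →
        ∀ f2 : MvPolynomial H K, f2.IsHomogeneous d →
        (∀ ν ∈ f2.support, ¬ IsStdMon ν → (ν = μ'.1 ∨ RevLexLT σ ν μ'.1)) →
        ∃ r : MvPolynomial H K, r.IsHomogeneous d ∧
          (∀ ν ∈ r.support, IsStdMon ν) ∧ f2 - r ∈ I) →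
      ∀ f : MvPolynomial H K, f.IsHomogeneous d →
      (∀ ν ∈ f.support, ¬ IsStdMon ν → RevLexLT σ ν μ0) →
      ∃ r : MvPolynomial H K, r.IsHomogeneous d ∧
        (∀ ν ∈ r.support, IsStdMon ν) ∧ f - r ∈ I := by
    intro μ0 hIH f hf hcond
    set NS := f.support.filter (fun ν => ¬ IsStdMon ν) with hNS
    rcases NS.eq_empty_or_nonempty with hemp | hne2
    · apply hbase f hf
      intro ν hν
      by_contra hc
      have : ν ∈ NS := Finset.mem_filter.mpr ⟨hν, hc⟩
      rw [hemp] at this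
      exact absurd this (Finset.notMem_empty ν)
    · obtain ⟨μ', hμ'NS, hmax⟩ := exists_max_finset (RevLexLT σ)
        (fun hab hbc => revlex_trans hσ.1 hab hbc)
        (fun a b hab => revlex_total hσ.1 hab) hne2
      have hμ'f : μ' ∈ f.support := (Finset.mem_filter.mp hμ'NS).1
      have hμ'ns : ¬ IsStdMon μ' := (Finset.mem_filter.mp hμ'NS).2
      have hμ'd : mdeg μ' = d := hdeg_of f hf μ' hμ'f
      refine hIH ⟨μ', hμ'd⟩ (hcond μ' hμ'f hμ'ns) f hf ?_
      intro ν hν hns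
      rcases eq_or_ne ν μ' with rfl | hneq
      · exact Or.inl rfl
      · exact Or.inr (hmax ν (Finset.mem_filter.mpr ⟨hν, hns⟩) hneq)
  have hPall : ∀ μ0 : S, ∀ f : MvPolynomial H K, f.IsHomogeneous d →
      (∀ ν ∈ f.support, ¬ IsStdMon ν → (ν = μ0.1 ∨ RevLexLT σ ν μ0.1)) →
      ∃ r : MvPolynomial H K, r.IsHomogeneous d ∧
        (∀ ν ∈ r.support, IsStdMon ν) ∧ f - r ∈ I := by
    intro μ0
    induction μ0 using WellFounded.induction hwf with
    | _ μ1 IH =>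
    intro f hf hcond
    by_cases hc : coeff μ1.1 f ≠ 0 ∧ ¬ IsStdMon μ1.1
    · obtain ⟨hc0, hcns⟩ := hc
      have hmemJ : monomial μ1.1 (1 : K) ∈ initialIdeal σ I := by
        rw [hinit σ hσ]
        exact not_isStdMon_monomial_mem hcns
      obtain ⟨ν0, hν0le, g0, hg0I, hg0lm⟩ := monomial_mem_initialIdeal hmemJ
      have hg1I : monomial (μ1.1 - ν0) (1 : K) * g0 ∈ I := Ideal.mul_mem_left I _ hg0I
      have hg1lm : IsLeadMon σ (monomial (μ1.1 - ν0) (1 : K) * g0) μ1.1 := by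
        have := isLeadMon_monomial_mul hg0lm (μ1.1 - ν0)
        rwa [tsub_add_cancel_of_le hν0le] at this
      set g1 := monomial (μ1.1 - ν0) (1 : K) * g0 with hg1def
      set g := homogeneousComponent d g1 with hgdef
      have hgI : g ∈ I := by
        have hmem := hhom d hg1I
        have hdec : (DirectSum.decompose (homogeneousSubmodule H K) g1 d :
            MvPolynomial H K) = homogeneousComponent d g1 := by
          rw [← DirectSum.Decomposition.decompose'_eq]
          exact decomposition.decompose'_apply g1 d
        rwa [hdec] at hmem
      have hgsup : ∀ ν, ν ∈ g.support ↔ Finsupp.degree ν = d ∧ ν ∈ g1.support := by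
        intro ν
        rw [MvPolynomial.mem_support_iff, hgdef, coeff_homogeneousComponent]
        constructor
        · intro hx
          by_cases hd2 : Finsupp.degree ν = d
          · rw [if_pos hd2] at hx
            exact ⟨hd2, MvPolynomial.mem_support_iff.mpr hx⟩
          · rw [if_neg hd2] at hx
            exact absurd rfl hx
        · rintro ⟨hd2, hν⟩
          rw [if_pos hd2]
          exact MvPolynomial.mem_support_iff.mp hν
      have hglm : IsLeadMon σ g μ1.1 := by
        refine ⟨(hgsup _).mpr ⟨?_, hg1lm.1⟩, ?_⟩
        · rw [← mdeg_eq_degree]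
          exact μ1.2
        · intro ν hν hne
          exact hg1lm.2 ν ((hgsup ν).mp hν).2 hne
      have hghom : g.IsHomogeneous d := homogeneousComponent_isHomogeneous d g1
      have hlc : coeff μ1.1 g ≠ 0 := MvPolynomial.mem_support_iff.mp hglm.1
      set c : K := coeff μ1.1 f / coeff μ1.1 g with hcdef
      set f' := f - c • g with hf'def
      have hf'hom : f'.IsHomogeneous d := by
        have h1 : f ∈ homogeneousSubmodule H K d := (mem_homogeneousSubmodule d f).mpr hf
        have h2 : g ∈ homogeneousSubmodule H K d := (mem_homogeneousSubmodule d g).mpr hghom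
        have h3 := Submodule.sub_mem _ h1 (Submodule.smul_mem _ c h2)
        exact (mem_homogeneousSubmodule d f').mp (by rw [hf'def]; exact h3)
      have hcoeff0 : coeff μ1.1 f' = 0 := by
        rw [hf'def, coeff_sub, coeff_smul, hcdef, smul_eq_mul,
          div_mul_cancel₀ _ hlc, sub_self]
      have hcondf' : ∀ ν ∈ f'.support, ¬ IsStdMon ν → RevLexLT σ ν μ1.1 := by
        intro ν hν hns
        have hνne : ν ≠ μ1.1 := by
          intro h
          rw [h] at hν
          exact (MvPolynomial.mem_support_iff.mp hν) hcoeff0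
        have hνmem : ν ∈ f.support ∪ g.support := by
          by_contra hc2
          rw [Finset.mem_union] at hc2
          push_neg at hc2
          have h1 : coeff ν f = 0 := MvPolynomial.notMem_support_iff.mp hc2.1
          have h2 : coeff ν g = 0 := MvPolynomial.notMem_support_iff.mp hc2.2
          exact (MvPolynomial.mem_support_iff.mp hν)
            (by rw [hf'def, coeff_sub, coeff_smul, h1, h2, smul_eq_mul, mul_zero, sub_zero])
        rcases Finset.mem_union.mp hνmem with h | h
        · rcases hcond ν h hns with h' | h'
          · exact absurd h' hνne
          · exact h'
        · exact hglm.2 ν h hνne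
      obtain ⟨r, hrhom, hrstd, hrI⟩ :=
        hglue μ1.1 (fun μ' hμ' => IH μ' hμ') f' hf'hom hcondf'
      refine ⟨r, hrhom, hrstd, ?_⟩
      have hcgI : c • g ∈ I := by
        rw [MvPolynomial.smul_eq_C_mul]
        exact Ideal.mul_mem_left I _ hgI
      have heq : f - c • g - r + c • g = f - r := by
        rw [sub_right_comm, sub_add_cancel]
      have : f - r = (f' - r) + c • g := by rw [hf'def, heq]
      rw [this]
      exact I.add_mem hrI hcgI
    · apply hglue μ1.1 (fun μ' hμ' => IH μ' hμ') f hf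
      intro ν hν hns
      rcases hcond ν hν hns with rfl | h
      · exact absurd ⟨MvPolynomial.mem_support_iff.mp hν, hns⟩ hc
      · exact h
  intro f hf
  set NS := f.support.filter (fun ν => ¬ IsStdMon ν) with hNS
  rcases NS.eq_empty_or_nonempty with hemp | hne2
  · apply hbase f hf
    intro ν hν
    by_contra hcc
    have : ν ∈ NS := Finset.mem_filter.mpr ⟨hν, hcc⟩
    rw [hemp] at this
    exact absurd this (Finset.notMem_empty ν)
  · obtain ⟨μ', hμ'NS, hmax⟩ := exists_max_finset (RevLexLT σ)
      (fun hab hbc => revlex_trans hσ.1 hab hbc)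
      (fun a b hab => revlex_total hσ.1 hab) hne2
    have hμ'f : μ' ∈ f.support := (Finset.mem_filter.mp hμ'NS).1
    have hμ'd : mdeg μ' = d := hdeg_of f hf μ' hμ'f
    refine hPall ⟨μ', hμ'd⟩ f hf ?_
    intro ν hν hns
    rcases eq_or_ne ν μ' with rfl | hneq
    · exact Or.inl rfl
    · exact Or.inr (hmax ν (Finset.mem_filter.mpr ⟨hν, hns⟩) hneq)

end Stmt16Aux

open Stmt16Aux

/-- let `H` be a finite poset, `K` a field and `A = K[H]/I` with
`I` homogeneous.  If `in_τ(I) = J_H` for every revlex term order `τ` coming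
from a linear extension `σ` of the order of `H`, then `A` is a homogeneous ASL
on `H`: (ASL1) the standard monomials are linearly independent in `A`, and
(ASL2) for each incomparable pair `x, y` the ideal `I` contains a straightening
relation `xy − ∑ λ_{zt} zt` with `z ≤ t`, `z < x` and `z < y`. -/
theorem stmt16 {K H : Type*} [Field K] [Fintype H] [DecidableEq H]
    [PartialOrder H] (I : Ideal (MvPolynomial H K))
    (hhom : I.IsHomogeneous (homogeneousSubmodule H K))
    (hinit : ∀ σ : H → ℕ, IsLinExt σ → initialIdeal σ I = JHIdeal K H) :
    LinearIndependent K
      (fun μ : {μ : H →₀ ℕ // IsStdMon μ} =>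
        Ideal.Quotient.mk I (monomial μ.1 (1 : K))) ∧
    ∀ x y : H, ¬ x ≤ y → ¬ y ≤ x →
      ∃ (s : Finset (H × H)) (c : H × H → K),
        (∀ p ∈ s, p.1 ≤ p.2 ∧ p.1 < x ∧ p.1 < y) ∧
        X x * X y - ∑ p ∈ s, c p • (X p.1 * X p.2) ∈ I := by
  classical
  have hsmul : ∀ (a : K) (p : MvPolynomial H K),
      Ideal.Quotient.mk I (a • p) = a • Ideal.Quotient.mk I p := by
    intro a p
    have h := map_smul (Ideal.Quotient.mkₐ K I) a p
    rwa [Ideal.Quotient.mkₐ_eq_mk] at h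
  constructor
  · rw [linearIndependent_iff']
    intro s g hsum i hi
    by_contra hgi
    set f : MvPolynomial H K := ∑ j ∈ s, g j • monomial j.1 (1 : K) with hfdef
    have hfI : f ∈ I := by
      rw [← Ideal.Quotient.eq_zero_iff_mem]
      have h1 : Ideal.Quotient.mk I f =
          ∑ j ∈ s, g j • Ideal.Quotient.mk I (monomial j.1 (1 : K)) := by
        rw [hfdef, map_sum]
        exact Finset.sum_congr rfl (fun j _ => hsmul (g j) _)
      rw [h1, hsum]
    have hcoeff : ∀ ρ : H →₀ ℕ, coeff ρ f = ∑ j ∈ s, g j * (if j.1 = ρ then 1 else 0) := by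
      intro ρ
      rw [hfdef, MvPolynomial.coeff_sum]
      exact Finset.sum_congr rfl (fun j _ => by
        rw [MvPolynomial.coeff_smul, MvPolynomial.coeff_monomial, smul_eq_mul])
    have hcoeffi : coeff i.1 f = g i := by
      rw [hcoeff]
      rw [Finset.sum_eq_single_of_mem i hi (fun j _ hji => by
        rw [if_neg (fun h => hji (Subtype.ext h)), mul_zero])]
      rw [if_pos rfl, mul_one]
    have hf0 : f ≠ 0 := by
      intro h
      apply hgi
      rw [← hcoeffi, h, MvPolynomial.coeff_zero]
    obtain ⟨σ, hσ, -⟩ := exists_linExt H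
    obtain ⟨μs, hlm⟩ := exists_leadMon hσ.1 hf0
    have hμstd : IsStdMon μs := by
      have hμsup := MvPolynomial.mem_support_iff.mp hlm.1
      have hex : ∃ j ∈ s, μs = j.1 := by
        by_contra hc
        push_neg at hc
        apply hμsup
        rw [hcoeff]
        exact Finset.sum_eq_zero (fun j hj => by
          rw [if_neg (fun h => hc j hj h.symm), mul_zero])
      obtain ⟨j, _, rfl⟩ := hex
      exact j.2
    have hmem : monomial μs (1 : K) ∈ JHIdeal K H := by
      rw [← hinit σ hσ]
      exact leadMon_mem_initialIdeal hfI hlm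
    exact isStdMon_not_mem hμstd hmem
  · intro x y hxy hyx
    obtain ⟨σ0, hσ0, -⟩ := exists_linExt H
    have hXXhom : (X x * X y : MvPolynomial H K).IsHomogeneous 2 := by
      have := (isHomogeneous_X K x).mul (isHomogeneous_X K y)
      exact this
    obtain ⟨r, hrhom, hrstd, hrI⟩ := reduction hhom hinit hσ0 2 (X x * X y) hXXhom
    set μ : H →₀ ℕ := Finsupp.single x 1 + Finsupp.single y 1 with hμdef
    have hxyne : x ≠ y := fun e => hxy (e ▸ le_refl x)
    have hμx : μ x = 1 := by
      rw [hμdef, Finsupp.add_apply, Finsupp.single_apply, Finsupp.single_apply,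
        if_pos rfl, if_neg (fun h => hxyne h.symm)]
      omega
    have hμy : μ y = 1 := by
      rw [hμdef, Finsupp.add_apply, Finsupp.single_apply, Finsupp.single_apply,
        if_neg hxyne, if_pos rfl]
    have hμns : ¬ IsStdMon μ := by
      intro hstd
      have hx : x ∈ μ.support := Finsupp.mem_support_iff.mpr (by rw [hμx]; exact one_ne_zero)
      have hy : y ∈ μ.support := Finsupp.mem_support_iff.mpr (by rw [hμy]; exact one_ne_zero)
      exact (hstd x hx y hy).elim hxy hyx
    have hμr : μ ∉ r.support := fun h => hμns (hrstd μ h)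
    set f0 : MvPolynomial H K := X x * X y - r with hf0def
    have hf0I : f0 ∈ I := hrI
    have hcoeffμ : coeff μ f0 = 1 := by
      rw [hf0def, MvPolynomial.coeff_sub, X_mul_X_eq, MvPolynomial.coeff_monomial,
        if_pos rfl, MvPolynomial.notMem_support_iff.mp hμr, sub_zero]
    have hf00 : f0 ≠ 0 := by
      intro h
      rw [h, MvPolynomial.coeff_zero] at hcoeffμ
      exact one_ne_zero hcoeffμ.symm
    have hsup : ∀ ρ ∈ f0.support, ρ = μ ∨ ρ ∈ r.support := by
      intro ρ hρ
      by_contra hc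
      push_neg at hc
      apply MvPolynomial.mem_support_iff.mp hρ
      rw [hf0def, MvPolynomial.coeff_sub, X_mul_X_eq, MvPolynomial.coeff_monomial,
        if_neg (fun h => hc.1 h.symm), MvPolynomial.notMem_support_iff.mp hc.2, sub_zero]
    have hrlt : ∀ ν ∈ r.support, ∀ σ : H → ℕ, IsLinExt σ → RevLexLT σ ν μ := by
      intro ν hν σ hσ
      obtain ⟨μs, hlm⟩ := exists_leadMon hσ.1 hf00
      have hμsJ : monomial μs (1 : K) ∈ JHIdeal K H := by
        rw [← hinit σ hσ]
        exact leadMon_mem_initialIdeal hf0I hlm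
      have hμsns : ¬ IsStdMon μs := fun hstd => isStdMon_not_mem hstd hμsJ
      have hμseq : μs = μ := by
        rcases hsup μs hlm.1 with h | h
        · exact h
        · exact absurd (hrstd μs h) hμsns
      have hνμ : ν ≠ μ := fun h => hμr (h ▸ hν)
      have hνf0 : ν ∈ f0.support := by
        rw [MvPolynomial.mem_support_iff, hf0def, MvPolynomial.coeff_sub, X_mul_X_eq,
          MvPolynomial.coeff_monomial, if_neg (fun h => hνμ h.symm), zero_sub, neg_ne_zero]
        exact MvPolynomial.mem_support_iff.mp hν
      have h := hlm.2 ν hνf0 (by rw [hμseq]; exact hνμ)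
      rwa [hμseq] at h
    have hrdeg : ∀ ν ∈ r.support, mdeg ν = 2 := by
      intro ν hν
      rw [mdeg_eq_degree, Finsupp.degree_eq_weight_one]
      exact hrhom (MvPolynomial.mem_support_iff.mp hν)
    have hpair : ∀ ν ∈ r.support, ∃ p : H × H, p.1 ≤ p.2 ∧
        ν = Finsupp.single p.1 1 + Finsupp.single p.2 1 := by
      intro ν hν
      obtain ⟨z, t, hzt, hteq⟩ := std_deg2 (hrstd ν hν) (hrdeg ν hν)
      exact ⟨(z, t), hzt, hteq⟩
    set F : (H →₀ ℕ) → H × H := fun ν =>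
      if h : ∃ p : H × H, p.1 ≤ p.2 ∧ ν = Finsupp.single p.1 1 + Finsupp.single p.2 1
      then h.choose else (x, x) with hFdef
    have hFspec : ∀ ν ∈ r.support, (F ν).1 ≤ (F ν).2 ∧
        ν = Finsupp.single (F ν).1 1 + Finsupp.single (F ν).2 1 := by
      intro ν hν
      have h := hpair ν hν
      simp only [hFdef, dif_pos h]
      exact h.choose_spec
    refine ⟨r.support.image F,
      fun p => coeff (Finsupp.single p.1 1 + Finsupp.single p.2 1) r, ?_, ?_⟩
    · intro p hp
      obtain ⟨ν, hν, rfl⟩ := Finset.mem_image.mp hp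
      obtain ⟨hle, heq⟩ := hFspec ν hν
      have hνμ : ν ≠ μ := fun h => hμr (h ▸ hν)
      refine ⟨hle, ?_, ?_⟩
      · refine key_lt hxy hle ?_ ?_
        · rw [← heq]
          exact hνμ
        · intro σ hσ
          rw [← heq]
          exact hrlt ν hν σ hσ
      · refine key_lt hyx hle ?_ ?_
        · rw [← heq]
          intro h
          exact hνμ (by rw [h, hμdef, add_comm])
        · intro σ hσ
          rw [← heq]
          have := hrlt ν hν σ hσ
          rwa [hμdef, add_comm (Finsupp.single x 1)] at this
    · have hinj : ∀ a ∈ r.support, ∀ b ∈ r.support, F a = F b → a = b := by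
        intro a ha b hb hab
        rw [(hFspec a ha).2, (hFspec b hb).2, hab]
      rw [Finset.sum_image hinj]
      have hterm : ∀ ν ∈ r.support,
          coeff (Finsupp.single (F ν).1 1 + Finsupp.single (F ν).2 1) r
            • (X (F ν).1 * X (F ν).2 : MvPolynomial H K) = monomial ν (coeff ν r) := by
        intro ν hν
        rw [X_mul_X_eq, ← (hFspec ν hν).2, MvPolynomial.smul_monomial, smul_eq_mul, mul_one]
      rw [Finset.sum_congr rfl hterm, MvPolynomial.support_sum_monomial_coeff]
      exact hrI
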